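/- For any affine permutation w̃ of size n, shi(w̃) = shi(w̃⁻¹), where shi(ṽ) is the number of affine transpositions ((i,j)) with 1 ≤ i ≤ n and i < j < n+i such that ṽ(i) > ṽ(j). -/

import Mathlib

/-- `shi(w̃) = shi(w̃⁻¹)`: the number of affine transpositions `((i,j))` with `1 ≤ i ≤ n`,
`i < j < n + i` and `w̃(i) > w̃(j)` is the same for an affine permutation and its inverse. -/
theorem shi_inverse (n : ℕ) (hn : 1 ≤ n) (f : Equiv.Perm ℤ)
    (h1 : ∀ k : ℤ, f (k + n) = f k + n)
    (h2 : ∑ i ∈ Finset.Icc (1 : ℤ) (n : ℤ), f i = n * (n + 1) / 2) :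
    Nat.card {p : ℤ × ℤ // 1 ≤ p.1 ∧ p.1 ≤ n ∧ p.1 < p.2 ∧ p.2 < n + p.1 ∧
        f p.2 < f p.1}
      = Nat.card {p : ℤ × ℤ // 1 ≤ p.1 ∧ p.1 ≤ n ∧ p.1 < p.2 ∧ p.2 < n + p.1 ∧
          f.symm p.2 < f.symm p.1} := by
  clear h2
  have hN : 1 ≤ (n : ℤ) := by exact_mod_cast hn
  set N : ℤ := (n : ℤ) with hNdef
  have hN0 : 0 < N := hN
  -- f commutes with adding multiples of N
  have hmul : ∀ m k : ℤ, f (k + m * N) = f k + m * N := by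
    intro m
    induction m using Int.induction_on with
    | zero => simp
    | succ m ih =>
      intro k
      have e : k + ((m : ℤ) + 1) * N = (k + (m : ℤ) * N) + N := by ring
      rw [e, h1, ih]; ring
    | pred m ih =>
      intro k
      have key : ∀ x : ℤ, f (x - N) = f x - N := by
        intro x
        have h := h1 (x - N)
        have e : x - N + N = x := by ring
        rw [e] at h
        linarith
      have e : k + (-(m : ℤ) - 1) * N = (k + (-(m : ℤ)) * N) - N := by ring
      rw [e, key, ih]; ring
  have hsymmul : ∀ m k : ℤ, f.symm (k + m * N) = f.symm k + m * N := by
    intro m k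
    apply f.injective
    rw [Equiv.apply_symm_apply, hmul, Equiv.apply_symm_apply]
  -- normalization into the window [1, N]
  have hnorm : ∀ j : ℤ, 1 ≤ j - ((j - 1) / N) * N ∧ j - ((j - 1) / N) * N ≤ N := by
    intro j
    have h := Int.emod_add_mul_ediv (j - 1) N
    have h2 := Int.emod_nonneg (j - 1) (by omega : N ≠ 0)
    have h3 := Int.emod_lt_of_pos (j - 1) hN0
    have hc : ((j - 1) / N) * N = N * ((j - 1) / N) := mul_comm _ _
    constructor <;> linarith
  set I : Set (ℤ × ℤ) := {p | 1 ≤ p.1 ∧ p.1 ≤ N ∧ p.1 < p.2 ∧ f p.2 < f p.1} with hI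
  set A : Set (ℤ × ℤ) := {p | p ∈ I ∧ N + p.1 < p.2} with hA
  set B : Set (ℤ × ℤ) := {p | p ∈ I ∧ N + f p.2 < f p.1} with hB
  set S : Set (ℤ × ℤ) :=
    {p | 1 ≤ p.1 ∧ p.1 ≤ N ∧ p.1 < p.2 ∧ p.2 < N + p.1 ∧ f p.2 < f p.1} with hS
  set S' : Set (ℤ × ℤ) :=
    {p | 1 ≤ p.1 ∧ p.1 ≤ N ∧ p.1 < p.2 ∧ p.2 < N + p.1 ∧ f.symm p.2 < f.symm p.1} with hS'
  have hAI : A ⊆ I := fun p hp => hp.1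
  have hBI : B ⊆ I := fun p hp => hp.1
  -- I is finite
  have hTne : (Finset.Icc (1 : ℤ) N).Nonempty := ⟨1, by simp [hN]⟩
  set M : ℤ := (Finset.Icc (1 : ℤ) N).sup' hTne (fun j => j - f j) with hM
  set F : ℤ := (Finset.Icc (1 : ℤ) N).sup' hTne (fun j => f j) with hF
  have hIfin : I.Finite := by
    apply Set.Finite.subset ((Set.finite_Icc (1 : ℤ) N).prod (Set.finite_Icc 2 (F + M)))
    rintro ⟨i, j⟩ ⟨hi1, hi2, hij, hfij⟩
    have hfi : f i ≤ F := Finset.le_sup' (fun j => f j) (Finset.mem_Icc.mpr ⟨hi1, hi2⟩)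
    set m := (j - 1) / N with hm
    obtain ⟨hr1, hr2⟩ := hnorm j
    have hfj : f j = f (j - m * N) + m * N := by
      have h := hmul m (j - m * N)
      have e : j - m * N + m * N = j := by ring
      rw [e] at h
      linarith
    have hsup : (j - m * N) - f (j - m * N) ≤ M :=
      Finset.le_sup' (fun x => x - f x) (Finset.mem_Icc.mpr ⟨hr1, hr2⟩)
    exact ⟨Set.mem_Icc.mpr ⟨hi1, hi2⟩, Set.mem_Icc.mpr ⟨by linarith, by linarith⟩⟩
  -- S = I \ A
  have hSIA : S = I \ A := by
    ext ⟨i, j⟩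
    simp only [hS, hI, hA, Set.mem_setOf_eq, Set.mem_diff, not_and]
    constructor
    · rintro ⟨ha1, ha2, ha3, ha4, ha5⟩
      exact ⟨⟨ha1, ha2, ha3, ha5⟩, fun _ => by linarith⟩
    · rintro ⟨⟨ha1, ha2, ha3, ha5⟩, hna⟩
      refine ⟨ha1, ha2, ha3, ?_, ha5⟩
      have hle : ¬ (N + i < j) := fun hc => hna ⟨ha1, ha2, ha3, ha5⟩ hc
      have hne : j ≠ N + i := by
        intro he
        rw [he, show N + i = i + N by ring, h1 i] at ha5
        linarith
      omega
  -- the shift bijection A ≃ B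
  have himgAB : (fun p : ℤ × ℤ => (p.1, p.2 - N)) '' A = B := by
    ext ⟨a, b⟩
    simp only [hA, hB, hI, Set.mem_image, Set.mem_setOf_eq, Prod.mk.injEq]
    constructor
    · rintro ⟨⟨i, j⟩, ⟨⟨hi1, hi2, hij, hf⟩, hfar⟩, h1e, h2e⟩
      dsimp only at hi1 hi2 hij hf hfar h1e h2e
      subst h1e
      have hfb : f b = f j - N := by
        have h := h1 b
        rw [show b + N = j by omega] at h
        linarith
      refine ⟨⟨hi1, hi2, by omega, by linarith⟩, by linarith⟩
    · rintro ⟨⟨hb1, hb2, hab, hf⟩, hfar⟩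
      refine ⟨(a, b + N), ⟨⟨hb1, hb2, ?_, ?_⟩, ?_⟩, rfl, by ring⟩
      · show a < b + N; linarith
      · show f (b + N) < f a
        rw [h1 b]; linarith
      · show N + a < b + N; linarith
  have hinjAB : Set.InjOn (fun p : ℤ × ℤ => (p.1, p.2 - N)) A := by
    rintro ⟨i, j⟩ _ ⟨i', j'⟩ _ heq
    simp only [Prod.mk.injEq] at heq
    obtain ⟨e1, e2⟩ := heq
    simp only [Prod.mk.injEq]
    omega
  -- the normalization map ψ : (I \ B) ≃ S'
  set ψ : ℤ × ℤ → ℤ × ℤ :=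
    fun p => (f p.2 - ((f p.2 - 1) / N) * N, f p.1 - ((f p.2 - 1) / N) * N) with hψ
  have himg : ψ '' (I \ B) = S' := by
    ext ⟨a, b⟩
    simp only [hψ, hS', hI, hB, Set.mem_image, Set.mem_setOf_eq, Set.mem_diff, not_and,
      Prod.mk.injEq]
    constructor
    · rintro ⟨⟨i, j⟩, ⟨⟨hi1, hi2, hij, hfij⟩, hnB⟩, ha, hb⟩
      dsimp only at hi1 hi2 hij hfij hnB ha hb
      set m := (f j - 1) / N with hm
      obtain ⟨hr1, hr2⟩ := hnorm (f j)
      rw [← hm] at hr1 hr2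
      have hfle : ¬ (N + f j < f i) := fun hc => hnB ⟨hi1, hi2, hij, hfij⟩ hc
      have hfne : f i ≠ f j + N := by
        intro he
        have h := h1 j
        have : f i = f (j + N) := by rw [h]; linarith
        have := f.injective this
        omega
      have hsa : f.symm a = j - m * N := by
        rw [← ha, show f j - m * N = f j + (-m) * N by ring, hsymmul,
          Equiv.symm_apply_apply]
        ring
      have hsb : f.symm b = i - m * N := by
        rw [← hb, show f i - m * N = f i + (-m) * N by ring, hsymmul,
          Equiv.symm_apply_apply]
        ring
      refine ⟨by omega, by omega, by omega, by omega, ?_⟩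
      rw [hsa, hsb]
      omega
    · rintro ⟨ha1, ha2, hab, hbn, hsym⟩
      set k := (f.symm b - 1) / N with hk
      obtain ⟨hk1, hk2⟩ := hnorm (f.symm b)
      rw [← hk] at hk1 hk2
      refine ⟨(f.symm b - k * N, f.symm a - k * N), ⟨⟨hk1, hk2, by omega, ?_⟩, ?_⟩, ?_, ?_⟩
      · -- f j < f i
        have hfj : f (f.symm a - k * N) = a - k * N := by
          rw [show f.symm a - k * N = f.symm a + (-k) * N by ring, hmul,
            Equiv.apply_symm_apply]
          ring
        have hfi : f (f.symm b - k * N) = b - k * N := by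
          rw [show f.symm b - k * N = f.symm b + (-k) * N by ring, hmul,
            Equiv.apply_symm_apply]
          ring
        rw [hfj, hfi]
        omega
      · -- not in B
        intro _
        have hfj : f (f.symm a - k * N) = a - k * N := by
          rw [show f.symm a - k * N = f.symm a + (-k) * N by ring, hmul,
            Equiv.apply_symm_apply]
          ring
        have hfi : f (f.symm b - k * N) = b - k * N := by
          rw [show f.symm b - k * N = f.symm b + (-k) * N by ring, hmul,
            Equiv.apply_symm_apply]
          ring
        rw [hfj, hfi]
        omega
      · -- first component of ψ equals a
        have hfj : f (f.symm a - k * N) = a - k * N := by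
          rw [show f.symm a - k * N = f.symm a + (-k) * N by ring, hmul,
            Equiv.apply_symm_apply]
          ring
        rw [hfj]
        have hm0 : (a - k * N - 1) / N = -k := by
          rw [show a - k * N - 1 = (a - 1) + (-k) * N by ring,
            Int.add_mul_ediv_right _ _ (by omega : N ≠ 0),
            Int.ediv_eq_zero_of_lt (by omega) (by omega)]
          ring
        rw [hm0]
        ring
      · -- second component of ψ equals b
        have hfj : f (f.symm a - k * N) = a - k * N := by
          rw [show f.symm a - k * N = f.symm a + (-k) * N by ring, hmul,
            Equiv.apply_symm_apply]
          ring
        have hfi : f (f.symm b - k * N) = b - k * N := by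
          rw [show f.symm b - k * N = f.symm b + (-k) * N by ring, hmul,
            Equiv.apply_symm_apply]
          ring
        rw [hfj, hfi]
        have hm0 : (a - k * N - 1) / N = -k := by
          rw [show a - k * N - 1 = (a - 1) + (-k) * N by ring,
            Int.add_mul_ediv_right _ _ (by omega : N ≠ 0),
            Int.ediv_eq_zero_of_lt (by omega) (by omega)]
          ring
        rw [hm0]
        ring
  have hinjψ : Set.InjOn ψ (I \ B) := by
    rintro ⟨i, j⟩ ⟨hpI, _⟩ ⟨i', j'⟩ ⟨hpI', _⟩ heq
    obtain ⟨hi1, hi2, hij, hfij⟩ := hpI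
    obtain ⟨hi1', hi2', hij', hfij'⟩ := hpI'
    dsimp only at hi1 hi2 hij hfij hi1' hi2' hij' hfij'
    simp only [hψ, Prod.mk.injEq] at heq
    obtain ⟨ha, hb⟩ := heq
    set m := (f j - 1) / N with hm
    set m' := (f j' - 1) / N with hm'
    have hri : i - m * N = i' - m' * N := by
      have h := congrArg f.symm hb
      rw [show f i - m * N = f i + (-m) * N by ring,
        show f i' - m' * N = f i' + (-m') * N by ring, hsymmul, hsymmul,
        Equiv.symm_apply_apply, Equiv.symm_apply_apply] at h
      linarith
    have hrj : j - m * N = j' - m' * N := by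
      have h := congrArg f.symm ha
      rw [show f j - m * N = f j + (-m) * N by ring,
        show f j' - m' * N = f j' + (-m') * N by ring, hsymmul, hsymmul,
        Equiv.symm_apply_apply, Equiv.symm_apply_apply] at h
      linarith
    have hd : (m - m') * N = i - i' := by linear_combination -hri
    have hmm : m = m' := by
      rcases lt_trichotomy m m' with h | h | h
      · have h1' : (m - m') * N ≤ (-1) * N :=
          mul_le_mul_of_nonneg_right (by omega) hN0.le
        nlinarith
      · exact h
      · have h1' : (1 : ℤ) * N ≤ (m - m') * N :=
          mul_le_mul_of_nonneg_right (by omega) hN0.le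
        nlinarith
    rw [hmm] at hri hrj
    simp only [Prod.mk.injEq]
    omega
  -- finiteness of the pieces
  have hAfin : A.Finite := hIfin.subset hAI
  have hBfin : B.Finite := hIfin.subset hBI
  -- cardinality computations
  have hcardAB : A.ncard = B.ncard := by
    rw [← himgAB, Set.ncard_image_of_injOn hinjAB]
  have hcardS : S.ncard = I.ncard - A.ncard := by
    rw [hSIA, Set.ncard_diff hAI hAfin]
  have hcardS' : S'.ncard = I.ncard - B.ncard := by
    rw [← himg, Set.ncard_image_of_injOn hinjψ,
      Set.ncard_diff hBI hBfin]
  have hAle : A.ncard ≤ I.ncard := Set.ncard_le_ncard hAI hIfin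
  have hBle : B.ncard ≤ I.ncard := Set.ncard_le_ncard hBI hIfin
  have e1 : Nat.card {p : ℤ × ℤ // 1 ≤ p.1 ∧ p.1 ≤ N ∧ p.1 < p.2 ∧ p.2 < N + p.1 ∧
      f p.2 < f p.1} = S.ncard := Nat.card_coe_set_eq S
  have e2 : Nat.card {p : ℤ × ℤ // 1 ≤ p.1 ∧ p.1 ≤ N ∧ p.1 < p.2 ∧ p.2 < N + p.1 ∧
      f.symm p.2 < f.symm p.1} = S'.ncard := Nat.card_coe_set_eq S'
  rw [e1, e2, hcardS, hcardS', hcardAB]
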